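/- Let Φ be an affine root system and c a Coxeter element in its Weyl group. For every m ∈ ℤ and every β ∈ c^m T^→_c one has K(γ_c, β) > 0, while for every m ∈ ℤ and every β ∈ c^m T^←_c one has K(γ_c, β) < 0. In particular, the orbits of roots in T^→_c are separated from the orbits of roots in T^←_c by the hyperplane U_c = {v : K(γ_c, v) = 0}. -/

import Mathlib

open scoped BigOperators

noncomputable section

/-- A symmetrizable generalized Cartan matrix of affine type, together with the
coefficient vector `dz` of the primitive positive imaginary root `δ` spanning the
(one dimensional) kernel of the associated symmetric bilinear form. -/
structure AffineGCM (n : ℕ) where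
  /-- the generalized Cartan matrix -/
  a : Matrix (Fin n) (Fin n) ℤ
  /-- symmetrizing factors -/
  d : Fin n → ℝ
  diag : ∀ i, a i i = 2
  offdiag : ∀ i j, i ≠ j → a i j ≤ 0
  d_pos : ∀ i, 0 < d i
  symmetrizable : ∀ i j, d i * (a i j : ℝ) = d j * (a j i : ℝ)
  /-- `K` is positive semidefinite (on the real span of the simple roots) -/
  posSemidef : ∀ g : Fin n → ℝ, 0 ≤ ∑ i, ∑ j, g i * g j * (d i * (a i j : ℝ))
  /-- `K` is not positive definite -/
  not_posDef : ∃ g : Fin n → ℝ, g ≠ 0 ∧ ∑ i, ∑ j, g i * g j * (d i * (a i j : ℝ)) = 0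
  /-- the restriction of `K` to the span of every proper subset of the simple roots
  is positive definite -/
  proper_posDef : ∀ J : Finset (Fin n), J ≠ Finset.univ →
    ∀ g : Fin n → ℝ, (∀ i, i ∉ J → g i = 0) → g ≠ 0 →
      0 < ∑ i, ∑ j, g i * g j * (d i * (a i j : ℝ))
  /-- coordinates of the positive imaginary root `δ` in the basis of simple roots -/
  dz : Fin n → ℤ
  dz_pos : ∀ i, 0 < dz i
  /-- `δ` is the imaginary root closest to the origin: its coordinates are coprime -/
  dz_prim : Finset.univ.gcd dz = 1
  /-- `δ` spans the kernel of `K` -/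
  dz_ker : ∀ j, ∑ i, (dz i : ℝ) * (d i * (a i j : ℝ)) = 0

namespace AffineGCM

variable {n : ℕ}

/-- The ambient vector space `V`, with the simple roots as standard basis. -/
abbrev V (n : ℕ) := Fin n → ℂ

/-- the simple root `α i` (the `i`-th standard basis vector) -/
def α (i : Fin n) : V n := Pi.single i 1

/-- a vector is *positive* if it lies in the nonnegative real span of the simple roots -/
def IsPosRoot (v : V n) : Prop := ∀ i, 0 ≤ (v i).re ∧ (v i).im = 0

/-- a vector is *negative* if it lies in the nonpositive real span of the simple roots -/
def IsNegRoot (v : V n) : Prop := ∀ i, (v i).re ≤ 0 ∧ (v i).im = 0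

/-- the `g`-orbit of `x`: all `g ^ k • x` for integers `k` -/
def orbit (g : V n ≃ₗ[ℂ] V n) (x : V n) : Set (V n) := Set.range fun k : ℤ => (g ^ k) x

/-- `U g`: the span of all eigenvectors of `g`, i.e. the direct sum of its eigenspaces -/
def eigSpan (g : V n ≃ₗ[ℂ] V n) : Submodule ℂ (V n) :=
  ⨆ μ : ℂ, Module.End.eigenspace (g : Module.End ℂ (V n)) μ

/-- the span `V_fin` of the simple roots other than `α aff` -/
def Vfin (aff : Fin n) : Submodule ℂ (V n) :=
  Submodule.span ℂ (α '' {i : Fin n | i ≠ aff})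

variable (C : AffineGCM n)

/-- the simple coroot `α i ^ ∨ = (d i)⁻¹ • α i` -/
def coroot (i : Fin n) : V n := ((C.d i : ℂ))⁻¹ • α i

/-- The symmetric bilinear form `K`, determined by `K (coroot i) (α j) = a i j`,
that is, `K (α i) (α j) = d i * a i j`. -/
def K : V n →ₗ[ℂ] V n →ₗ[ℂ] ℂ :=
  LinearMap.mk₂ ℂ
    (fun x y => ∑ i, ∑ j, x i * y j * ((C.d i : ℂ) * (C.a i j : ℂ)))
    (fun x x' y => by
      simp only [Pi.add_apply, add_mul, Finset.sum_add_distrib])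
    (fun r x y => by
      simp only [Pi.smul_apply, smul_eq_mul, Finset.mul_sum]
      exact Finset.sum_congr rfl fun i _ => Finset.sum_congr rfl fun j _ => by ring)
    (fun x y y' => by
      simp only [Pi.add_apply, mul_add, add_mul, Finset.sum_add_distrib])
    (fun r x y => by
      simp only [Pi.smul_apply, smul_eq_mul, Finset.mul_sum]
      exact Finset.sum_congr rfl fun i _ => Finset.sum_congr rfl fun j _ => by ring)

/-- the linear map `v ↦ v - K x v • y`; reflections are special cases -/
def reflMap (x y : V n) : V n →ₗ[ℂ] V n where
  toFun v := v - C.K x v • y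
  map_add' u v := by simp only [map_add, add_smul]; abel
  map_smul' r u := by simp only [map_smul, smul_eq_mul, RingHom.id_apply, smul_sub, smul_smul]

lemma reflMap_apply (x y v : V n) : C.reflMap x y v = v - C.K x v • y := rfl

/-- the simple reflection `s i` as a linear endomorphism -/
def sLin (i : Fin n) : V n →ₗ[ℂ] V n := C.reflMap (C.coroot i) (α i)

lemma K_α_α (i j : Fin n) : C.K (α i) (α j) = (C.d i : ℂ) * (C.a i j : ℂ) := by
  simp [K, α, LinearMap.mk₂_apply, Pi.single_apply, ite_mul, zero_mul,
    Finset.sum_ite_eq', Finset.mem_univ]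

lemma K_coroot_α (i j : Fin n) : C.K (C.coroot i) (α j) = (C.a i j : ℂ) := by
  have hd : (C.d i : ℂ) ≠ 0 := by exact_mod_cast ne_of_gt (C.d_pos i)
  simp only [coroot, map_smul, LinearMap.smul_apply, smul_eq_mul, K_α_α]
  field_simp

lemma sLin_invol (i : Fin n) (v : V n) : C.sLin i (C.sLin i v) = v := by
  have h2 : C.K (C.coroot i) (α i) = 2 := by
    rw [K_coroot_α, C.diag]; norm_num
  simp only [sLin, reflMap_apply, map_sub, map_smul, h2, smul_eq_mul]
  module

/-- the simple reflection `s i` -/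
def s (i : Fin n) : V n ≃ₗ[ℂ] V n :=
  LinearEquiv.ofLinear (C.sLin i) (C.sLin i)
    (LinearMap.ext fun v => C.sLin_invol i v) (LinearMap.ext fun v => C.sLin_invol i v)

/-- the Weyl group `W`, as a subgroup of the group of linear automorphisms of `V` -/
def Wgroup : Subgroup (V n ≃ₗ[ℂ] V n) := Subgroup.closure (Set.range C.s)

/-- the Coxeter element `c = s 1 * s 2 * ⋯ * s n` -/
def cox : V n ≃ₗ[ℂ] V n := (List.ofFn C.s).prod

/-- the positive imaginary root `δ` -/
def δv : V n := fun i => ((C.dz i : ℤ) : ℂ)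

/-- the set of real roots: `W`-images of the simple roots -/
def realRoots : Set (V n) := {v | ∃ w ∈ C.Wgroup, ∃ i, w (α i) = v}

/-- the root system `Φ`: real roots together with the imaginary roots `k • δ`, `k ≠ 0` -/
def Φ : Set (V n) := C.realRoots ∪ {v | ∃ k : ℤ, k ≠ 0 ∧ v = (k : ℂ) • C.δv}

/-- `T→ = {α 1, s 1 α 2, …, s 1 ⋯ s (n-1) α n}` -/
def Tproj : Set (V n) :=
  Set.range fun k : Fin n => ((List.ofFn C.s).take k.val).prod (α k)

/-- `T← = {α n, s n α (n-1), …, s n ⋯ s 2 α 1}` -/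
def Tinj : Set (V n) :=
  Set.range fun k : Fin n => ((List.ofFn C.s).reverse.take (n - 1 - k.val)).prod (α k)

/-- `Φ_fin`, the finite root system `Φ ∩ V_fin` -/
def Φfin (aff : Fin n) : Set (V n) := C.Φ ∩ (Vfin aff : Set (V n))

/-- the root `θ = δ - [δ : α aff] • α aff` of `Φ_fin` -/
def θv (aff : Fin n) : V n := C.δv - ((C.dz aff : ℤ) : ℂ) • α aff

/-- the reflection `t β : v ↦ v - K (β^∨) v • β` in a (real) root `β`,
where `β^∨ = (2 / K β β) • β` -/
def tRefl (β : V n) : V n →ₗ[ℂ] V n := C.reflMap ((2 / C.K β β) • β) β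

/-- `c_◁ = s 1 * ⋯ * s (aff - 1)` -/
def cleft (aff : Fin n) : V n →ₗ[ℂ] V n := ((List.ofFn C.sLin).take aff.val).prod

/-- `c_▷ = s (aff + 1) * ⋯ * s n` -/
def cright (aff : Fin n) : V n →ₗ[ℂ] V n := ((List.ofFn C.sLin).drop (aff.val + 1)).prod

/-- `Υ^fin = Φ_fin ∩ U c` -/
def Υfin (aff : Fin n) : Set (V n) := C.Φfin aff ∩ (eigSpan C.cox : Set (V n))

/-- `B` is a simple system for a set `Θ` of roots: a linearly independent subset of `Θ`
such that every element of `Θ` is a nonnegative or a nonpositive combination of `B`. -/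
def IsSimpleSystem (Θ : Set (V n)) (B : Finset (V n)) : Prop :=
  ↑B ⊆ Θ ∧ LinearIndependent ℂ (fun b : B => (b : V n)) ∧
    ∀ v ∈ Θ, ∃ g : V n → ℝ, ((∀ b ∈ B, 0 ≤ g b) ∨ (∀ b ∈ B, g b ≤ 0)) ∧
      v = ∑ b ∈ B, (g b : ℂ) • b

/-- two roots of `Θ` are connected if they are joined by a chain of roots of `Θ`
that are pairwise non-orthogonal (with respect to `K`) -/
def Connected (Θ : Set (V n)) (x y : V n) : Prop :=
  Relation.ReflTransGen (fun u v => u ∈ Θ ∧ v ∈ Θ ∧ C.K u v ≠ 0) x y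

/-- the irreducible component of `x` in `Θ` -/
def component (Θ : Set (V n)) (x : V n) : Set (V n) := {y | y ∈ Θ ∧ C.Connected Θ x y}

/-- a set of roots is of finite type `A` if it consists exactly of the vectors
`±(β i + β (i+1) + ⋯ + β j)` for a linearly independent family `β 1, …, β k` -/
def IsTypeA (Θ : Set (V n)) : Prop :=
  ∃ (k : ℕ) (β : Fin k → V n), LinearIndependent ℂ β ∧ (∀ i, β i ∈ Θ) ∧
    Θ = {v | ∃ i j : Fin k, i ≤ j ∧
      (v = ∑ l ∈ Finset.Icc i j, β l ∨ v = -∑ l ∈ Finset.Icc i j, β l)}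

/-- `Ω = {β 1, t (β 1) (β 2), …, t (β 1) ⋯ t (β (m-1)) (β m)}` for an ordered
tuple `β` of roots -/
def Ωset {m : ℕ} (β : Fin m → V n) : Set (V n) :=
  Set.range fun j : Fin m => (((List.ofFn fun i => C.tRefl (β i)).take j.val).prod) (β j)

/-- `s i` is initial in a Coxeter element `c` if `c` is the product of a permutation
of all the simple reflections starting with `s i` -/
def IsInitial (i : Fin n) (c : V n ≃ₗ[ℂ] V n) : Prop :=
  ∃ l : List (Fin n), (i :: l).Perm (List.finRange n) ∧ ((i :: l).map C.s).prod = c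

/-- `s i` is final in a Coxeter element `c` if `c` is the product of a permutation
of all the simple reflections ending with `s i` -/
def IsFinal (i : Fin n) (c : V n ≃ₗ[ℂ] V n) : Prop :=
  ∃ l : List (Fin n), (l ++ [i]).Perm (List.finRange n) ∧ ((l ++ [i]).map C.s).prod = c

/-- the skew-symmetric bilinear form `ω_c`, determined by
`ω_c (coroot i) (α j) = a i j` if `i > j`, `= 0` if `i = j`, `= -a i j` if `i < j` -/
def ω : V n →ₗ[ℂ] V n →ₗ[ℂ] ℂ :=
  LinearMap.mk₂ ℂ
    (fun x y => ∑ i, ∑ j, x i * y j *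
      ((if j < i then 1 else if i = j then 0 else -1) * ((C.d i : ℂ) * (C.a i j : ℂ))))
    (fun x x' y => by
      simp only [Pi.add_apply, add_mul, Finset.sum_add_distrib])
    (fun r x y => by
      simp only [Pi.smul_apply, smul_eq_mul, Finset.mul_sum]
      exact Finset.sum_congr rfl fun i _ => Finset.sum_congr rfl fun j _ => by ring)
    (fun x y y' => by
      simp only [Pi.add_apply, mul_add, add_mul, Finset.sum_add_distrib])
    (fun r x y => by
      simp only [Pi.smul_apply, smul_eq_mul, Finset.mul_sum]
      exact Finset.sum_congr rfl fun i _ => Finset.sum_congr rfl fun j _ => by ring)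

lemma K_apply (x y : V n) :
    C.K x y = ∑ i, ∑ j, x i * y j * ((C.d i : ℂ) * (C.a i j : ℂ)) := rfl

lemma d_ne (i : Fin n) : (C.d i : ℂ) ≠ 0 := by
  exact_mod_cast ne_of_gt (C.d_pos i)

lemma B_symm (i j : Fin n) :
    (C.d i : ℂ) * (C.a i j : ℂ) = (C.d j : ℂ) * (C.a j i : ℂ) := by
  exact_mod_cast congrArg Complex.ofReal (C.symmetrizable i j)

lemma K_symm (x y : V n) : C.K x y = C.K y x := by
  rw [K_apply, K_apply, Finset.sum_comm]
  refine Finset.sum_congr rfl fun p _ => Finset.sum_congr rfl fun q _ => ?_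
  rw [C.B_symm q p]; ring

lemma K_α_left (i : Fin n) (y : V n) :
    C.K (α i) y = ∑ j, y j * ((C.d i : ℂ) * (C.a i j : ℂ)) := by
  rw [K_apply, Finset.sum_eq_single i]
  · exact Finset.sum_congr rfl fun j _ => by simp [α]
  · intro b _ hb
    exact Finset.sum_eq_zero fun j _ => by simp [α, Pi.single_apply, hb]
  · intro h; exact absurd (Finset.mem_univ i) h

lemma K_coroot_left (i : Fin n) (y : V n) :
    C.K (C.coroot i) y = ∑ j, y j * (C.a i j : ℂ) := by
  have : C.K (C.coroot i) y = (C.d i : ℂ)⁻¹ * C.K (α i) y := by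
    simp [coroot, map_smul]
  rw [this, K_α_left, Finset.mul_sum]
  refine Finset.sum_congr rfl fun j _ => ?_
  field_simp [C.d_ne i]

lemma K_δ_left (y : V n) : C.K C.δv y = 0 := by
  rw [K_apply, Finset.sum_comm]
  apply Finset.sum_eq_zero; intro j _
  have hc : ∑ i, ((C.dz i : ℂ)) * ((C.d i : ℂ) * (C.a i j : ℂ)) = 0 := by
    have h := congrArg Complex.ofReal (C.dz_ker j)
    push_cast at h
    simpa using h
  calc ∑ i, C.δv i * y j * ((C.d i : ℂ) * (C.a i j : ℂ))
      = y j * ∑ i, ((C.dz i : ℂ)) * ((C.d i : ℂ) * (C.a i j : ℂ)) := by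
        rw [Finset.mul_sum]
        exact Finset.sum_congr rfl fun i _ => by simp [δv]; ring
    _ = 0 := by rw [hc, mul_zero]

lemma K_δ_right (x : V n) : C.K x C.δv = 0 := by rw [K_symm]; exact C.K_δ_left x

lemma K_coroot_δ (i : Fin n) : C.K (C.coroot i) C.δv = 0 := C.K_δ_right _

lemma s_apply (i : Fin n) (v : V n) :
    C.s i v = v - C.K (C.coroot i) v • α i := rfl

lemma s_α_self (i : Fin n) : C.s i (α i) = - α i := by
  have h2 : C.K (C.coroot i) (α i) = 2 := by
    rw [K_coroot_α, C.diag]; norm_num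
  rw [s_apply, h2]
  module

lemma s_δ (i : Fin n) : C.s i C.δv = C.δv := by
  rw [s_apply, K_coroot_δ]
  module

lemma K_coroot_eq (i : Fin n) (y : V n) :
    C.K (C.coroot i) y = (C.d i : ℂ)⁻¹ * C.K (α i) y := by
  simp [coroot, map_smul]

lemma K_s_s (i : Fin n) (x y : V n) : C.K (C.s i x) (C.s i y) = C.K x y := by
  rw [s_apply, s_apply]
  have hxa : C.K x (α i) = C.K (α i) x := C.K_symm _ _
  simp only [map_sub, map_smul, LinearMap.sub_apply, LinearMap.smul_apply, smul_eq_mul]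
  rw [K_coroot_eq, K_coroot_eq, K_α_α, C.diag i, hxa]
  have hd := C.d_ne i
  push_cast
  field_simp
  ring

lemma s_mul_self (i : Fin n) : C.s i * C.s i = 1 :=
  LinearEquiv.ext fun v => C.sLin_invol i v

lemma s_inv (i : Fin n) : (C.s i)⁻¹ = C.s i :=
  inv_eq_of_mul_eq_one_left (C.s_mul_self i)

lemma s_s_apply (i : Fin n) (v : V n) : C.s i (C.s i v) = v := C.sLin_invol i v

/-- product of the simple reflections along a list of indices -/
def wordProd (l : List (Fin n)) : V n ≃ₗ[ℂ] V n := (l.map C.s).prod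

lemma wordProd_nil : C.wordProd [] = 1 := rfl

lemma wordProd_cons (i : Fin n) (l : List (Fin n)) :
    C.wordProd (i :: l) = C.s i * C.wordProd l := by
  simp [wordProd]

lemma wordProd_apply_cons (i : Fin n) (l : List (Fin n)) (v : V n) :
    C.wordProd (i :: l) v = C.s i (C.wordProd l v) := by
  rw [wordProd_cons]; rfl

lemma K_word (l : List (Fin n)) (x y : V n) :
    C.K (C.wordProd l x) (C.wordProd l y) = C.K x y := by
  induction l generalizing x y with
  | nil => rfl
  | cons i l ih =>
      rw [wordProd_apply_cons, wordProd_apply_cons, K_s_s]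
      exact ih x y

lemma wordProd_δ (l : List (Fin n)) : C.wordProd l C.δv = C.δv := by
  induction l with
  | nil => rfl
  | cons i l ih => rw [wordProd_apply_cons, ih, s_δ]

lemma cox_eq_wordProd : C.cox = C.wordProd (List.finRange n) := by
  rw [cox, wordProd, List.ofFn_eq_map]

lemma cox_δ : C.cox C.δv = C.δv := by
  rw [cox_eq_wordProd]; exact C.wordProd_δ _

lemma K_cox (x y : V n) : C.K (C.cox x) (C.cox y) = C.K x y := by
  rw [cox_eq_wordProd]; exact C.K_word _ x y

/-- the suffix products `s k ⋯ s (n-1)` applied to a vector -/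
def uSeq (v : V n) (k : ℕ) : V n := ((List.ofFn C.s).drop k).prod v

lemma uSeq_of_le (v : V n) {k : ℕ} (hk : n ≤ k) : C.uSeq v k = v := by
  unfold uSeq
  rw [List.drop_eq_nil_of_le (by simpa using hk)]
  rfl

lemma uSeq_succ (v : V n) (k : ℕ) (hk : k < n) :
    C.uSeq v k = C.s ⟨k, hk⟩ (C.uSeq v (k + 1)) := by
  unfold uSeq
  rw [List.drop_eq_getElem_cons (by simpa using hk), List.prod_cons]
  rw [List.getElem_ofFn]
  rfl

lemma uSeq_zero (v : V n) : C.uSeq v 0 = C.cox v := rfl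

lemma s_apply_coord_ne (i : Fin n) (v : V n) {j : Fin n} (hj : j ≠ i) :
    (C.s i v) j = v j := by
  rw [s_apply]
  simp [α, Pi.single_apply, hj]

lemma s_apply_coord_self (i : Fin n) (v : V n) :
    (C.s i v) i = v i - C.K (C.coroot i) v := by
  rw [s_apply]
  simp [α, Pi.single_apply]

lemma uSeq_coord_high (v : V n) (j : Fin n) :
    ∀ m k, n ≤ k + m → (j : ℕ) < k → C.uSeq v k j = v j := by
  intro m
  induction m with
  | zero => intro k hk _; rw [C.uSeq_of_le v (by simpa using hk)]
  | succ m ih =>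
      intro k hk hj
      by_cases hkn : n ≤ k
      · rw [C.uSeq_of_le v hkn]
      · push_neg at hkn
        rw [C.uSeq_succ v k hkn, C.s_apply_coord_ne _ _ (by
          intro h; rw [h] at hj; simp at hj)]
        exact ih (k+1) (by omega) (by omega)

lemma uSeq_coord_telescope (v : V n) (j : Fin n) :
    ∀ m k, (j : ℕ) + 1 ≤ k + m → k ≤ (j : ℕ) →
      C.uSeq v k j = v j - C.K (C.coroot j) (C.uSeq v ((j : ℕ) + 1)) := by
  intro m
  induction m with
  | zero => intro k h1 h2; omega
  | succ m ih =>
      intro k h1 h2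
      have hkn : k < n := lt_of_le_of_lt h2 j.isLt
      by_cases hkj : k = (j : ℕ)
      · have hje : (⟨k, hkn⟩ : Fin n) = j := Fin.ext hkj
        rw [C.uSeq_succ v k hkn, hje, C.s_apply_coord_self,
          show k + 1 = (j : ℕ) + 1 by omega,
          C.uSeq_coord_high v j (n - ((j : ℕ)+1)) ((j : ℕ)+1) (by omega) (by omega)]
      · have hkj' : k < (j : ℕ) := lt_of_le_of_ne h2 hkj
        rw [C.uSeq_succ v k hkn, C.s_apply_coord_ne _ _ (by
          intro h
          apply hkj
          exact congrArg Fin.val h |>.symm ▸ rfl)]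
        exact ih (k+1) (by omega) (by omega)

lemma cox_coord (v : V n) (j : Fin n) :
    C.cox v j = v j - C.K (C.coroot j) (C.uSeq v ((j : ℕ) + 1)) := by
  rw [← uSeq_zero]
  exact C.uSeq_coord_telescope v j ((j : ℕ) + 1) 0 (by omega) (by omega)

section Gamma

variable {γ : V n}

lemma cox_symm_γ (hγ1 : C.cox γ - γ = C.δv) : C.cox.symm γ = γ - C.δv := by
  have h : C.cox (γ - C.δv) = γ := by
    have h2 : C.cox γ = γ + C.δv := by rw [← hγ1]; abel
    rw [map_sub, cox_δ, h2]; abel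
  rw [LinearEquiv.symm_apply_eq]
  exact h.symm

lemma K_γ_cox (hγ1 : C.cox γ - γ = C.δv) (x : V n) :
    C.K γ (C.cox x) = C.K γ x := by
  calc C.K γ (C.cox x) = C.K (C.cox (C.cox.symm γ)) (C.cox x) := by
        rw [LinearEquiv.apply_symm_apply]
    _ = C.K (C.cox.symm γ) x := C.K_cox _ _
    _ = C.K γ x := by
        rw [cox_symm_γ C hγ1, map_sub]
        simp [K_δ_left]

lemma K_γ_cox_symm (hγ1 : C.cox γ - γ = C.δv) (x : V n) :
    C.K γ (C.cox.symm x) = C.K γ x := by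
  conv_rhs => rw [← LinearEquiv.apply_symm_apply C.cox x]
  rw [K_γ_cox C hγ1]

lemma K_γ_zpow (hγ1 : C.cox γ - γ = C.δv) (m : ℤ) (x : V n) :
    C.K γ ((C.cox ^ m) x) = C.K γ x := by
  induction m using Int.induction_on generalizing x with
  | zero => rfl
  | succ m ih =>
      have hpow : (C.cox ^ ((m : ℤ) + 1)) x = (C.cox ^ (m : ℤ)) (C.cox x) := by
        rw [zpow_add_one]; rfl
      rw [hpow, ih, K_γ_cox C hγ1]
  | pred m ih =>
      have hpow : (C.cox ^ (-(m : ℤ) - 1)) x = (C.cox ^ (-(m : ℤ))) (C.cox⁻¹ x) := by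
        rw [zpow_sub_one]; rfl
      rw [hpow, ih]
      exact K_γ_cox_symm C hγ1 x

lemma K_uSeq_α (hγ1 : C.cox γ - γ = C.δv) (k : Fin n) :
    C.K (C.uSeq γ ((k : ℕ) + 1)) (α k) = -((C.d k : ℂ) * (C.dz k : ℂ)) := by
  have hcoord := C.cox_coord γ k
  have hδ : (C.dz k : ℂ) = C.cox γ k - γ k := by
    have := congrFun hγ1 k
    simpa [δv] using this.symm
  have hK : C.K (C.coroot k) (C.uSeq γ ((k : ℕ) + 1)) = -(C.dz k : ℂ) := by
    rw [hδ, hcoord]; ring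
  have hrel : C.K (C.uSeq γ ((k : ℕ) + 1)) (α k)
      = (C.d k : ℂ) * C.K (C.coroot k) (C.uSeq γ ((k : ℕ) + 1)) := by
    rw [K_coroot_eq, C.K_symm]
    field_simp [C.d_ne k]
  rw [hrel, hK]; ring

lemma take_prod_eq (k : ℕ) :
    ((List.ofFn C.s).take k).prod = C.wordProd ((List.finRange n).take k) := by
  rw [wordProd, List.ofFn_eq_map, List.map_take]

lemma drop_prod_eq (k : ℕ) :
    ((List.ofFn C.s).drop k).prod = C.wordProd ((List.finRange n).drop k) := by
  rw [wordProd, List.ofFn_eq_map, List.map_drop]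

lemma uSeq_eq_word (v : V n) (k : ℕ) :
    C.uSeq v k = C.wordProd ((List.finRange n).drop k) v := by
  rw [uSeq, drop_prod_eq]

lemma K_s_α (k : Fin n) (w : V n) :
    C.K (C.s k w) (α k) = - C.K w (α k) := by
  calc C.K (C.s k w) (α k) = C.K (C.s k w) (C.s k (C.s k (α k))) := by rw [s_s_apply]
    _ = C.K w (C.s k (α k)) := C.K_s_s _ _ _
    _ = - C.K w (α k) := by rw [s_α_self]; simp

lemma K_Tproj (hγ1 : C.cox γ - γ = C.δv) (k : Fin n) :
    C.K γ (((List.ofFn C.s).take (k : ℕ)).prod (α k))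
      = (C.d k : ℂ) * (C.dz k : ℂ) := by
  set P := ((List.ofFn C.s).take (k : ℕ)).prod with hP
  set Q := ((List.ofFn C.s).drop (k : ℕ)).prod with hQ
  have hPQ : P * Q = C.cox := List.prod_take_mul_prod_drop _ _
  have hPsymm : P.symm γ = C.uSeq γ (k : ℕ) - C.δv := by
    have h1 : P.symm γ = Q (C.cox.symm γ) := by
      have : P⁻¹ = Q * C.cox⁻¹ := by
        rw [← hPQ]; group
      calc P.symm γ = P⁻¹ γ := rfl
        _ = (Q * C.cox⁻¹) γ := by rw [this]
        _ = Q (C.cox⁻¹ γ) := rfl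
        _ = Q (C.cox.symm γ) := rfl
    rw [h1, cox_symm_γ C hγ1, map_sub]
    have hQδ : Q C.δv = C.δv := by
      rw [hQ, drop_prod_eq]; exact C.wordProd_δ _
    rw [hQδ]
    rfl
  have step3 : C.K γ (P (α k)) = C.K (C.uSeq γ (k : ℕ)) (α k) := by
    calc C.K γ (P (α k)) = C.K (P (P.symm γ)) (P (α k)) := by
          rw [LinearEquiv.apply_symm_apply]
      _ = C.K (P.symm γ) (α k) := by
          rw [hP, take_prod_eq]; exact C.K_word _ _ _
      _ = C.K (C.uSeq γ (k : ℕ)) (α k) := by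
          rw [hPsymm, map_sub, LinearMap.sub_apply]
          simp [K_δ_left]
  have step4 : C.uSeq γ (k : ℕ) = C.s k (C.uSeq γ ((k : ℕ) + 1)) := by
    have := C.uSeq_succ γ (k : ℕ) k.isLt
    simpa [Fin.eta] using this
  rw [step3, step4, K_s_α, K_uSeq_α C hγ1]
  ring

lemma K_Tinj (hγ1 : C.cox γ - γ = C.δv) (k : Fin n) :
    C.K γ (((List.ofFn C.s).reverse.take (n - 1 - (k : ℕ))).prod (α k))
      = -((C.d k : ℂ) * (C.dz k : ℂ)) := by
  have hlen : (List.ofFn C.s).length = n := by simp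
  have harith : (List.ofFn C.s).length - (n - 1 - (k : ℕ)) = (k : ℕ) + 1 := by
    rw [hlen]; omega
  have hrev : (List.ofFn C.s).reverse.take (n - 1 - (k : ℕ))
      = ((List.ofFn C.s).drop ((k : ℕ) + 1)).reverse := by
    rw [List.take_reverse, harith]
  set L := (List.ofFn C.s).drop ((k : ℕ) + 1) with hL
  have hmapinv : L.map (fun x => x⁻¹) = L := by
    rw [hL, List.map_drop]
    congr 1
    rw [List.map_ofFn]
    exact congrArg List.ofFn (funext fun i => C.s_inv i)
  have hprod : L.reverse.prod = L.prod⁻¹ := by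
    rw [List.prod_inv_reverse, hmapinv]
  have hQ : L.prod γ = C.uSeq γ ((k : ℕ) + 1) := rfl
  rw [hrev, hprod]
  calc C.K γ (L.prod⁻¹ (α k))
      = C.K (L.prod γ) (L.prod (L.prod⁻¹ (α k))) := by
        rw [hL, drop_prod_eq]; exact (C.K_word _ _ _).symm
    _ = C.K (C.uSeq γ ((k : ℕ) + 1)) (α k) := by
        rw [hQ]
        congr 1
        calc L.prod (L.prod⁻¹ (α k)) = (L.prod * L.prod⁻¹) (α k) := rfl
          _ = α k := by rw [mul_inv_cancel]; rfl
    _ = -((C.d k : ℂ) * (C.dz k : ℂ)) := K_uSeq_α C hγ1 k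

end Gamma

/-- componentwise complex conjugation -/
def conjV (v : V n) : V n := fun i => (starRingEnd ℂ) (v i)

lemma conjV_δ : conjV C.δv = C.δv := by
  funext i
  simp [conjV, δv]

lemma conjV_smul (a : ℂ) (v : V n) :
    conjV (a • v) = (starRingEnd ℂ) a • conjV v := by
  funext i
  simp [conjV, mul_comm]

lemma conjV_add (u v : V n) : conjV (u + v) = conjV u + conjV v := by
  funext i; simp [conjV]

lemma K_coroot_conj (i : Fin n) (v : V n) :
    C.K (C.coroot i) (conjV v) = (starRingEnd ℂ) (C.K (C.coroot i) v) := by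
  rw [K_coroot_left, K_coroot_left, map_sum]
  refine Finset.sum_congr rfl fun j _ => ?_
  simp [conjV]

lemma conjV_s (i : Fin n) (v : V n) :
    C.s i (conjV v) = conjV (C.s i v) := by
  funext j
  have hr : conjV (C.s i v) j = (starRingEnd ℂ) ((C.s i v) j) := rfl
  by_cases h : j = i
  · subst h
    rw [hr, s_apply_coord_self, s_apply_coord_self, map_sub, ← K_coroot_conj]
    rfl
  · rw [hr, C.s_apply_coord_ne i (conjV v) h, C.s_apply_coord_ne i v h]
    rfl

lemma conjV_word (l : List (Fin n)) (v : V n) :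
    C.wordProd l (conjV v) = conjV (C.wordProd l v) := by
  induction l generalizing v with
  | nil => rfl
  | cons i l ih => rw [wordProd_apply_cons, wordProd_apply_cons, ih, conjV_s]

lemma conjV_cox (v : V n) : C.cox (conjV v) = conjV (C.cox v) := by
  rw [cox_eq_wordProd]; exact conjV_word C _ v

/-- the positive semidefinite hermitian form associated to `K` -/
def Hf (u v : V n) : ℂ := C.K u (conjV v)

lemma Hf_cox (u v : V n) : C.Hf (C.cox u) (C.cox v) = C.Hf u v := by
  rw [Hf, ← conjV_cox, K_cox]; rfl

lemma Hf_add_left (u u' v : V n) : C.Hf (u + u') v = C.Hf u v + C.Hf u' v := by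
  simp [Hf, map_add]

lemma Hf_add_right (u v v' : V n) : C.Hf u (v + v') = C.Hf u v + C.Hf u v' := by
  simp [Hf, conjV_add, map_add]

lemma Hf_smul_left (a : ℂ) (u v : V n) : C.Hf (a • u) v = a * C.Hf u v := by
  simp [Hf, map_smul]

lemma Hf_smul_right (a : ℂ) (u v : V n) :
    C.Hf u (a • v) = (starRingEnd ℂ) a * C.Hf u v := by
  simp [Hf, conjV_smul, map_smul]

lemma Hf_δ_left (v : V n) : C.Hf C.δv v = 0 := by
  rw [Hf, K_δ_left]

lemma Hf_δ_right (u : V n) : C.Hf u C.δv = 0 := by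
  rw [Hf, conjV_δ, K_δ_right]

lemma Hf_add_δ (x : V n) (t : ℂ) :
    C.Hf (x + t • C.δv) (x + t • C.δv) = C.Hf x x := by
  simp only [Hf_add_left, Hf_add_right, Hf_smul_left, Hf_smul_right,
    Hf_δ_left, Hf_δ_right, mul_zero, add_zero, zero_add]

/-- the real quadratic form -/
def qR (x : Fin n → ℝ) : ℝ := ∑ i, ∑ j, x i * x j * (C.d i * (C.a i j : ℝ))

/-- the real bilinear pairing -/
def bR (x y : Fin n → ℝ) : ℝ := ∑ i, ∑ j, x i * y j * (C.d i * (C.a i j : ℝ))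

lemma bR_symm (x y : Fin n → ℝ) : C.bR x y = C.bR y x := by
  rw [bR, bR, Finset.sum_comm]
  refine Finset.sum_congr rfl fun p _ => Finset.sum_congr rfl fun q _ => ?_
  rw [C.symmetrizable q p]; ring

lemma qR_nonneg (x : Fin n → ℝ) : 0 ≤ C.qR x := C.posSemidef x

lemma bR_expand (x y : Fin n → ℝ) (t : ℝ) :
    C.qR (x + t • y) = C.qR x + t * C.bR x y + t * C.bR y x + t ^ 2 * C.qR y := by
  simp only [qR, bR, Pi.add_apply, Pi.smul_apply, smul_eq_mul]
  rw [Finset.mul_sum, Finset.mul_sum, Finset.mul_sum, ← Finset.sum_add_distrib,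
    ← Finset.sum_add_distrib, ← Finset.sum_add_distrib]
  refine Finset.sum_congr rfl fun i _ => ?_
  rw [Finset.mul_sum, Finset.mul_sum, Finset.mul_sum, ← Finset.sum_add_distrib,
    ← Finset.sum_add_distrib, ← Finset.sum_add_distrib]
  exact Finset.sum_congr rfl fun j _ => by ring

lemma qR_zero_bR_zero {x : Fin n → ℝ} (hx : C.qR x = 0) (z : Fin n → ℝ) :
    C.bR x z = 0 := by
  set S := C.bR x z with hS
  set Q := C.qR z with hQdef
  have hQ : 0 ≤ Q := C.qR_nonneg z
  have hQ1 : (0:ℝ) < Q + 1 := by linarith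
  set t : ℝ := -S / (Q + 1) with ht
  have key : 0 ≤ 2 * t * S + t ^ 2 * Q := by
    have h := C.qR_nonneg (x + t • z)
    rw [C.bR_expand x z t, hx, ← hS, C.bR_symm z x, ← hS, ← hQdef] at h
    linarith
  have h2 : 2 * t * S + t ^ 2 * Q = -(S ^ 2 * (Q + 2)) / (Q + 1) ^ 2 := by
    rw [ht]
    field_simp
    ring
  rw [h2] at key
  have h4 : S ^ 2 * (Q + 2) ≤ 0 := by
    rcases div_nonneg_iff.mp key with ⟨h5, _⟩ | ⟨_, h6⟩
    · linarith
    · nlinarith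
  have h5 : S ^ 2 = 0 := by nlinarith [sq_nonneg S]
  exact (pow_eq_zero_iff (two_ne_zero)).mp h5

lemma bR_single (x : Fin n → ℝ) (j : Fin n) :
    C.bR x (Pi.single j 1) = ∑ i, x i * (C.d i * (C.a i j : ℝ)) := by
  rw [bR]
  refine Finset.sum_congr rfl fun i _ => ?_
  rw [Finset.sum_eq_single j]
  · simp
  · intro b _ hb; simp [Pi.single_apply, hb]
  · intro h; exact absurd (Finset.mem_univ j) h

/-- the radical of the real form is spanned by `dz` -/
lemma radical_real (i₀ : Fin n) (x : Fin n → ℝ)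
    (hx : ∀ j, ∑ i, x i * (C.d i * (C.a i j : ℝ)) = 0) :
    ∃ t : ℝ, ∀ i, x i = t * (C.dz i : ℝ) := by
  set t := x i₀ / (C.dz i₀ : ℝ) with ht
  have hdz : (C.dz i₀ : ℝ) ≠ 0 := by
    exact_mod_cast ne_of_gt (C.dz_pos i₀)
  refine ⟨t, ?_⟩
  set g : Fin n → ℝ := fun i => x i - t * (C.dz i : ℝ) with hg
  have hgker : ∀ j, ∑ i, g i * (C.d i * (C.a i j : ℝ)) = 0 := by
    intro j
    have h1 := hx j
    have h2 := C.dz_ker j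
    calc ∑ i, g i * (C.d i * (C.a i j : ℝ))
        = (∑ i, x i * (C.d i * (C.a i j : ℝ)))
          - t * ∑ i, (C.dz i : ℝ) * (C.d i * (C.a i j : ℝ)) := by
          rw [Finset.mul_sum, ← Finset.sum_sub_distrib]
          exact Finset.sum_congr rfl fun i _ => by rw [hg]; ring
      _ = 0 := by rw [h1, h2]; ring
  have hq : C.qR g = 0 := by
    rw [qR, Finset.sum_comm]
    apply Finset.sum_eq_zero
    intro j _
    calc ∑ i, g i * g j * (C.d i * (C.a i j : ℝ))
        = g j * ∑ i, g i * (C.d i * (C.a i j : ℝ)) := by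
          rw [Finset.mul_sum]
          exact Finset.sum_congr rfl fun i _ => by ring
      _ = 0 := by rw [hgker j, mul_zero]
  have hg0 : g i₀ = 0 := by
    have hh : g i₀ = x i₀ - x i₀ / (C.dz i₀ : ℝ) * (C.dz i₀ : ℝ) := rfl
    rw [hh]
    field_simp
    ring
  by_cases hgz : g = 0
  · intro i
    have := congrFun hgz i
    simp only [hg, Pi.zero_apply] at this
    linarith
  · exfalso
    have hJ : (Finset.univ.erase i₀ : Finset (Fin n)) ≠ Finset.univ := by
      intro h
      have h2 := Finset.notMem_erase i₀ (Finset.univ : Finset (Fin n))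
      rw [h] at h2
      exact h2 (Finset.mem_univ i₀)
    have := C.proper_posDef _ hJ g (fun i hi => by
      have : i = i₀ := by
        by_contra hne
        exact hi (Finset.mem_erase.mpr ⟨hne, Finset.mem_univ i⟩)
      rw [this]; exact hg0) hgz
    rw [qR] at hq
    linarith

lemma Hf_self_eq (v : V n) :
    C.Hf v v = ((C.qR (fun i => (v i).re) + C.qR (fun i => (v i).im) : ℝ) : ℂ) := by
  have hterm_re : ∀ i j : Fin n,
      (v i * conjV v j * ((C.d i : ℂ) * (C.a i j : ℂ))).re
        = (fun i => (v i).re) i * (fun i => (v i).re) j * (C.d i * (C.a i j : ℝ))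
          + (fun i => (v i).im) i * (fun i => (v i).im) j * (C.d i * (C.a i j : ℝ)) := by
    intro i j
    have hd : ((C.d i : ℂ) * (C.a i j : ℂ)) = ((C.d i * (C.a i j : ℝ) : ℝ) : ℂ) := by
      push_cast; ring
    rw [hd]
    have hcv : conjV v j = (starRingEnd ℂ) (v j) := rfl
    rw [hcv]
    simp only [Complex.mul_re, Complex.mul_im, Complex.conj_re, Complex.conj_im,
      Complex.ofReal_re, Complex.ofReal_im]
    ring
  have hterm_im : ∀ i j : Fin n,
      (v i * conjV v j * ((C.d i : ℂ) * (C.a i j : ℂ))).im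
        = (v i).im * (v j).re * (C.d i * (C.a i j : ℝ))
          - (v i).re * (v j).im * (C.d i * (C.a i j : ℝ)) := by
    intro i j
    have hd : ((C.d i : ℂ) * (C.a i j : ℂ)) = ((C.d i * (C.a i j : ℝ) : ℝ) : ℂ) := by
      push_cast; ring
    rw [hd]
    have hcv : conjV v j = (starRingEnd ℂ) (v j) := rfl
    rw [hcv]
    simp only [Complex.mul_re, Complex.mul_im, Complex.conj_re, Complex.conj_im,
      Complex.ofReal_re, Complex.ofReal_im]
    ring
  apply Complex.ext
  · rw [Hf, K_apply, Complex.re_sum,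
      Finset.sum_congr rfl fun i _ => Complex.re_sum _ _,
      Finset.sum_congr rfl fun (i : Fin n) _ =>
        Finset.sum_congr rfl fun (j : Fin n) _ => hterm_re i j,
      Complex.ofReal_re, qR, qR, ← Finset.sum_add_distrib]
    refine Finset.sum_congr rfl fun i _ => ?_
    rw [← Finset.sum_add_distrib]
  · rw [Hf, K_apply, Complex.im_sum,
      Finset.sum_congr rfl fun i _ => Complex.im_sum _ _,
      Finset.sum_congr rfl fun (i : Fin n) _ =>
        Finset.sum_congr rfl fun (j : Fin n) _ => hterm_im i j,
      Complex.ofReal_im]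
    have h1 : C.bR (fun i => (v i).im) (fun i => (v i).re)
        = C.bR (fun i => (v i).re) (fun i => (v i).im) := C.bR_symm _ _
    simp only [bR] at h1
    rw [Finset.sum_congr rfl fun (i : Fin n) _ =>
      (Finset.sum_sub_distrib (s := Finset.univ)
        (f := fun j => (v i).im * (v j).re * (C.d i * (C.a i j : ℝ)))
        (g := fun j => (v i).re * (v j).im * (C.d i * (C.a i j : ℝ)))),
      Finset.sum_sub_distrib, h1, sub_self]

lemma Hf_self_nonneg (v : V n) : ∃ r : ℝ, 0 ≤ r ∧ C.Hf v v = (r : ℂ) := by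
  refine ⟨_, ?_, C.Hf_self_eq v⟩
  have := C.qR_nonneg (fun i => (v i).re)
  have := C.qR_nonneg (fun i => (v i).im)
  linarith

/-- vectors of zero `H`-norm are multiples of `δ` -/
lemma Hf_self_zero (i₀ : Fin n) {v : V n} (hv : C.Hf v v = 0) :
    ∃ t : ℂ, v = t • C.δv := by
  have h := C.Hf_self_eq v
  rw [hv] at h
  have hsum : C.qR (fun i => (v i).re) + C.qR (fun i => (v i).im) = 0 := by
    exact_mod_cast h.symm
  have h1 : C.qR (fun i => (v i).re) = 0 := by
    have := C.qR_nonneg (fun i => (v i).re)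
    have := C.qR_nonneg (fun i => (v i).im)
    linarith
  have h2 : C.qR (fun i => (v i).im) = 0 := by
    have := C.qR_nonneg (fun i => (v i).re)
    linarith
  have hker1 : ∀ j, ∑ i, (v i).re * (C.d i * (C.a i j : ℝ)) = 0 := by
    intro j
    have := C.qR_zero_bR_zero h1 (Pi.single j 1)
    rwa [bR_single] at this
  have hker2 : ∀ j, ∑ i, (v i).im * (C.d i * (C.a i j : ℝ)) = 0 := by
    intro j
    have := C.qR_zero_bR_zero h2 (Pi.single j 1)
    rwa [bR_single] at this
  obtain ⟨t1, ht1⟩ := C.radical_real i₀ _ hker1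
  obtain ⟨t2, ht2⟩ := C.radical_real i₀ _ hker2
  refine ⟨(t1 : ℂ) + (t2 : ℂ) * Complex.I, ?_⟩
  funext i
  have hre := ht1 i
  have him := ht2 i
  have : v i = ((v i).re : ℂ) + ((v i).im : ℂ) * Complex.I := (Complex.re_add_im (v i)).symm
  rw [this, hre, him]
  simp [δv, Pi.smul_apply, smul_eq_mul]
  push_cast
  ring

lemma K_α_right (x : V n) (j : Fin n) :
    C.K x (α j) = ∑ i, x i * ((C.d i : ℂ) * (C.a i j : ℂ)) := by
  rw [K_symm, K_α_left]
  exact Finset.sum_congr rfl fun i _ => by rw [C.B_symm j i]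

lemma K_α_right_re (x : V n) (j : Fin n) :
    (C.K x (α j)).re = ∑ i, (x i).re * (C.d i * (C.a i j : ℝ)) := by
  rw [K_α_right, Complex.re_sum]
  refine Finset.sum_congr rfl fun i _ => ?_
  have hd : ((C.d i : ℂ) * (C.a i j : ℂ)) = ((C.d i * (C.a i j : ℝ) : ℝ) : ℂ) := by
    push_cast; ring
  rw [hd]
  simp [Complex.mul_re]

lemma K_α_right_im (x : V n) (j : Fin n) :
    (C.K x (α j)).im = ∑ i, (x i).im * (C.d i * (C.a i j : ℝ)) := by
  rw [K_α_right, Complex.im_sum]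
  refine Finset.sum_congr rfl fun i _ => ?_
  have hd : ((C.d i : ℂ) * (C.a i j : ℂ)) = ((C.d i * (C.a i j : ℝ) : ℝ) : ℂ) := by
    push_cast; ring
  rw [hd]
  simp [Complex.mul_im]

lemma reim_delta (i₀ : Fin n) (v : V n)
    (hre : ∀ j, ∑ i, (v i).re * (C.d i * (C.a i j : ℝ)) = 0)
    (him : ∀ j, ∑ i, (v i).im * (C.d i * (C.a i j : ℝ)) = 0) :
    ∃ t : ℂ, v = t • C.δv := by
  obtain ⟨t1, ht1⟩ := C.radical_real i₀ _ hre
  obtain ⟨t2, ht2⟩ := C.radical_real i₀ _ him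
  refine ⟨(t1 : ℂ) + (t2 : ℂ) * Complex.I, ?_⟩
  funext i
  have : v i = ((v i).re : ℂ) + ((v i).im : ℂ) * Complex.I := (Complex.re_add_im (v i)).symm
  rw [this, ht1 i, ht2 i]
  simp [δv, Pi.smul_apply, smul_eq_mul]
  push_cast
  ring

/-- the fixed space of the Coxeter element is spanned by `δ` -/
lemma fix_eq_delta (i₀ : Fin n) {v : V n} (hv : C.cox v = v) :
    ∃ t : ℂ, v = t • C.δv := by
  have hcoef : ∀ j : Fin n, C.K (C.coroot j) (C.uSeq v ((j : ℕ) + 1)) = 0 := by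
    intro j
    have h := C.cox_coord v j
    rw [hv] at h
    have h2 : v j - C.K (C.coroot j) (C.uSeq v ((j : ℕ) + 1)) = v j := h.symm
    have := sub_eq_self.mp h2
    exact this
  have huseq : ∀ m k, n ≤ k + m → C.uSeq v k = v := by
    intro m
    induction m with
    | zero => intro k hk; exact C.uSeq_of_le v (by omega)
    | succ m ih =>
        intro k hk
        by_cases hkn : k < n
        · rw [C.uSeq_succ v k hkn]
          rw [ih (k + 1) (by omega)]
          have h0 : C.K (C.coroot ⟨k, hkn⟩) v = 0 := by
            have hc := hcoef ⟨k, hkn⟩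
            rwa [show ((⟨k, hkn⟩ : Fin n) : ℕ) + 1 = k + 1 from rfl,
              ih (k + 1) (by omega)] at hc
          rw [s_apply, h0]
          module
        · exact C.uSeq_of_le v (by omega)
  have hco : ∀ j : Fin n, C.K (C.coroot j) v = 0 := by
    intro j
    have hc := hcoef j
    rwa [huseq n ((j : ℕ) + 1) (by omega)] at hc
  have hα : ∀ j : Fin n, C.K v (α j) = 0 := by
    intro j
    have h1 := hco j
    rw [K_coroot_eq] at h1
    rcases mul_eq_zero.mp h1 with h | h
    · exact absurd (inv_eq_zero.mp h) (C.d_ne j)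
    · rw [K_symm]; exact h
  refine C.reim_delta i₀ v (fun j => ?_) (fun j => ?_)
  · rw [← K_α_right_re, hα j]; rfl
  · rw [← K_α_right_im, hα j]; rfl

lemma end_pow_apply_succ (e : Module.End ℂ (V n)) (m : ℕ) (v : V n) :
    (e ^ (m + 1)) v = e ((e ^ m) v) := by
  rw [pow_succ']
  rfl

lemma Hf_pow_self (m : ℕ) (u : V n) :
    C.Hf (((C.cox : Module.End ℂ (V n)) ^ m) u) (((C.cox : Module.End ℂ (V n)) ^ m) u)
      = C.Hf u u := by
  induction m with
  | zero => rfl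
  | succ m ih =>
      rw [end_pow_apply_succ]
      have : C.Hf (C.cox (((C.cox : Module.End ℂ (V n)) ^ m) u))
          (C.cox (((C.cox : Module.End ℂ (V n)) ^ m) u))
          = C.Hf (((C.cox : Module.End ℂ (V n)) ^ m) u) (((C.cox : Module.End ℂ (V n)) ^ m) u) :=
        C.Hf_cox _ _
      exact this.trans ih

lemma Hf_self_pos {w : V n} (h0 : C.Hf w w ≠ 0) :
    ∃ r : ℝ, 0 < r ∧ C.Hf w w = (r : ℂ) := by
  obtain ⟨r, hr0, hr⟩ := C.Hf_self_nonneg w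
  refine ⟨r, lt_of_le_of_ne hr0 ?_, hr⟩
  rintro rfl
  exact h0 (by rw [hr]; norm_num)

lemma Hf_growth_aux {v w : V n} {r : ℝ} (hr : 0 < r) (hww : C.Hf w w = (r : ℂ))
    (heq : ∀ m : ℕ, C.Hf (v + ((m + 1 : ℕ) : ℂ) • w) (v + ((m + 1 : ℕ) : ℂ) • w) = C.Hf v v) :
    False := by
  set Cst := ‖C.Hf v w‖ + ‖C.Hf w v‖ with hCst
  have hineq : ∀ m : ℕ, ((m + 1 : ℕ) : ℝ) * r ≤ Cst := by
    intro m
    have h1 := heq m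
    set b : ℂ := ((m + 1 : ℕ) : ℂ) with hb
    have hexp : C.Hf (v + b • w) (v + b • w)
        = C.Hf v v + (starRingEnd ℂ) b * C.Hf v w + b * C.Hf w v
          + b * (starRingEnd ℂ) b * C.Hf w w := by
      rw [Hf_add_left, Hf_add_right, Hf_add_right, Hf_smul_left, Hf_smul_left,
        Hf_smul_right, Hf_smul_right]
      ring
    rw [hexp] at h1
    have hsb : (starRingEnd ℂ) b = b := by rw [hb]; exact Complex.conj_natCast _
    have h2 : b * C.Hf v w + b * C.Hf w v = -(b * b * (r : ℂ)) := by
      rw [hsb] at h1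
      rw [hww] at h1
      linear_combination h1
    have habs := congrArg (fun z : ℂ => ‖z‖) h2
    have hb_abs : ‖b‖ = ((m + 1 : ℕ) : ℝ) := by
      rw [hb, Complex.norm_natCast]
    have hrhs : ‖(-(b * b * (r : ℂ)))‖
        = ((m + 1 : ℕ) : ℝ) * ((m + 1 : ℕ) : ℝ) * r := by
      rw [norm_neg, norm_mul, norm_mul, hb_abs, Complex.norm_real, Real.norm_eq_abs, abs_of_pos hr]
    have hlhs : ‖b * C.Hf v w + b * C.Hf w v‖
        ≤ ((m + 1 : ℕ) : ℝ) * Cst := by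
      calc ‖b * C.Hf v w + b * C.Hf w v‖
          ≤ ‖b * C.Hf v w‖ + ‖b * C.Hf w v‖ :=
            norm_add_le _ _
        _ = ((m + 1 : ℕ) : ℝ) * Cst := by
            rw [norm_mul, norm_mul, hb_abs, hCst]; ring
    rw [habs, hrhs] at hlhs
    have hm1 : (0 : ℝ) < ((m + 1 : ℕ) : ℝ) := by positivity
    nlinarith
  obtain ⟨N, hN⟩ := exists_nat_gt (Cst / r)
  have h1 := hineq N
  have h2 : Cst < ((N : ℝ)) * r := (div_lt_iff₀ hr).mp hN
  have h3 : ((N : ℝ)) * r ≤ ((N + 1 : ℕ) : ℝ) * r := by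
    have : ((N : ℝ)) ≤ ((N + 1 : ℕ) : ℝ) := by push_cast; linarith
    nlinarith
  linarith

lemma genEig_ne (i₀ : Fin n) (μ : ℂ) (hμ : μ ≠ 1) :
    ∀ (k : ℕ) (v : V n), (((C.cox : Module.End ℂ (V n)) - μ • 1) ^ k) v = 0 →
      (C.cox : Module.End ℂ (V n)) v = μ • v := by
  intro k
  induction k with
  | zero =>
      intro v hv
      rw [pow_zero] at hv
      have : v = 0 := hv
      rw [this]
      simp
  | succ k ih =>
      intro v hv
      set e := (C.cox : Module.End ℂ (V n)) with he
      set w := e v - μ • v with hw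
      have hwe : (e - μ • 1) v = w := by
        simp [hw, LinearMap.sub_apply, LinearMap.smul_apply, Module.End.one_apply]
      have hker : ((e - μ • 1) ^ k) w = 0 := by
        rw [← hwe, ← Module.End.mul_apply, ← pow_succ]
        exact hv
      have hew : e w = μ • w := ih w hker
      have hcoxw : C.cox w = μ • w := hew
      have hw0 : w = 0 := by
        rcases eq_or_ne (C.Hf w w) 0 with h0 | h0
        · obtain ⟨t, ht⟩ := C.Hf_self_zero i₀ h0
          have h1 : C.cox w = w := by rw [ht, map_smul, cox_δ]
          rw [hcoxw] at h1
          have h2 : (μ - 1) • w = 0 := by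
            rw [sub_smul, one_smul, h1, sub_self]
          rcases smul_eq_zero.mp h2 with h3 | h3
          · exact absurd (sub_eq_zero.mp h3) hμ
          · exact h3
        · exfalso
          obtain ⟨r, hrpos, hr⟩ := C.Hf_self_pos h0
          -- |μ| = 1
          have hinv : C.Hf (C.cox w) (C.cox w) = C.Hf w w := C.Hf_cox w w
          rw [hcoxw, Hf_smul_left, Hf_smul_right, hr] at hinv
          have hns : Complex.normSq μ = 1 := by
            have h4 : (μ * (starRingEnd ℂ) μ) * (r : ℂ) = (r : ℂ) := by
              linear_combination hinv
            rw [Complex.mul_conj] at h4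
            have h5 : ((Complex.normSq μ - 1 : ℝ) : ℂ) * (r : ℂ) = 0 := by
              push_cast
              linear_combination h4
            rcases mul_eq_zero.mp h5 with h6 | h6
            · have : Complex.normSq μ - 1 = 0 := by exact_mod_cast h6
              linarith
            · exfalso
              have : r = 0 := by exact_mod_cast h6
              linarith
          have habsμ : ‖μ‖ = 1 := by
            have hsq := Complex.sq_norm μ
            rw [hns] at hsq
            nlinarith [norm_nonneg μ]
          have hμ0 : μ ≠ 0 := by
            intro h
            rw [h, norm_zero] at habsμ
            norm_num at habsμ
          -- orbit formula
          have horbit : ∀ m : ℕ, (e ^ (m + 1)) v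
              = (μ ^ (m + 1)) • v + (((m + 1 : ℕ) : ℂ) * μ ^ m) • w := by
            intro m
            induction m with
            | zero =>
                rw [pow_one]
                have : e v = μ • v + w := by rw [hw]; abel
                rw [this]
                push_cast
                rw [pow_one]
                simp
            | succ m ihm =>
                rw [end_pow_apply_succ, ihm]
                have hev : e (μ ^ (m + 1) • v + (((m + 1 : ℕ) : ℂ) * μ ^ m) • w)
                    = μ ^ (m + 1) • (e v) + (((m + 1 : ℕ) : ℂ) * μ ^ m) • (e w) := by
                  rw [map_add, map_smul, map_smul]
                rw [hev, hew]
                have hev2 : e v = μ • v + w := by rw [hw]; abel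
                rw [hev2, smul_add]
                simp only [smul_smul]
                match_scalars <;> push_cast <;> ring
          -- contradiction via growth
          -- renormalize: u_m := μ^{-(m+1)} • (e^(m+1)) v = v + ((m+1) μ^{-1}) • w; but instead
          -- we use Hf directly with the two-term expansion
          apply C.Hf_growth_aux (v := v) (w := μ⁻¹ • w) (r := r) hrpos
          · rw [Hf_smul_left, Hf_smul_right, hr]
            have : μ⁻¹ * ((starRingEnd ℂ) μ⁻¹ * (r : ℂ)) = ((Complex.normSq μ⁻¹ : ℝ) : ℂ) * r := by
              rw [← Complex.mul_conj]
              ring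
            rw [this]
            rw [map_inv₀, hns]
            norm_num
          · intro m
            have hpres := C.Hf_pow_self (m + 1) v
            rw [horbit m] at hpres
            have hfactor : (μ ^ (m + 1)) • v + (((m + 1 : ℕ) : ℂ) * μ ^ m) • w
                = (μ ^ (m + 1)) • (v + ((m + 1 : ℕ) : ℂ) • (μ⁻¹ • w)) := by
              rw [smul_add, smul_smul, smul_smul]
              congr 1
              congr 1
              rw [pow_succ]
              field_simp
            rw [hfactor, Hf_smul_left, Hf_smul_right, ← mul_assoc, Complex.mul_conj] at hpres
            rw [map_pow, hns, one_pow] at hpres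
            rw [Complex.ofReal_one, one_mul] at hpres
            exact hpres
      have hfinal : e v - μ • v = 0 := by rw [← hw, hw0]
      have := sub_eq_zero.mp hfinal
      exact this

lemma genEig_one (i₀ : Fin n) {γ : V n} (hγ1 : C.cox γ - γ = C.δv) :
    ∀ (k : ℕ) (v : V n), (((C.cox : Module.End ℂ (V n)) - (1 : ℂ) • 1) ^ k) v = 0 →
      ∃ a b : ℂ, v = a • γ + b • C.δv := by
  intro k
  induction k with
  | zero =>
      intro v hv
      rw [pow_zero] at hv
      have : v = 0 := hv
      exact ⟨0, 0, by rw [this]; simp⟩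
  | succ k ih =>
      intro v hv
      set e := (C.cox : Module.End ℂ (V n)) with he
      set w := e v - v with hw
      have hwe : (e - (1 : ℂ) • 1) v = w := by
        simp [hw, LinearMap.sub_apply, LinearMap.smul_apply, Module.End.one_apply]
      have hker : ((e - (1 : ℂ) • 1) ^ k) w = 0 := by
        rw [← hwe, ← Module.End.mul_apply, ← pow_succ]
        exact hv
      obtain ⟨a, b, hab⟩ := ih w hker
      have heγ : C.cox γ = γ + C.δv := by rw [← hγ1]; abel
      have hew : C.cox w = w + a • C.δv := by
        rw [hab, map_add, map_smul, map_smul, cox_δ, heγ]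
        module
      have hev : C.cox v = v + w := by rw [hw]; abel
      have horbit : ∀ m : ℕ, ∃ t : ℂ, (e ^ m) v = v + (m : ℂ) • w + t • C.δv := by
        intro m
        induction m with
        | zero => exact ⟨0, by simp⟩
        | succ m ihm =>
            obtain ⟨t, ht⟩ := ihm
            refine ⟨t + (m : ℂ) * a, ?_⟩
            rw [end_pow_apply_succ, ht]
            have : e (v + (m : ℂ) • w + t • C.δv)
                = C.cox v + (m : ℂ) • (C.cox w) + t • (C.cox C.δv) := by
              rw [map_add, map_add, map_smul, map_smul]
              rfl
            rw [this, cox_δ, hev, hew]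
            rw [smul_add]
            push_cast
            module
      have hHw : C.Hf w w = 0 := by
        by_contra h0
        obtain ⟨r, hrpos, hr⟩ := C.Hf_self_pos h0
        apply C.Hf_growth_aux (v := v) (w := w) hrpos hr
        intro m
        obtain ⟨t, ht⟩ := horbit (m + 1)
        have hpres := C.Hf_pow_self (m + 1) v
        rw [ht] at hpres
        have hδkill : C.Hf (v + ((m + 1 : ℕ) : ℂ) • w + t • C.δv)
            (v + ((m + 1 : ℕ) : ℂ) • w + t • C.δv)
            = C.Hf (v + ((m + 1 : ℕ) : ℂ) • w) (v + ((m + 1 : ℕ) : ℂ) • w) :=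
          C.Hf_add_δ _ t
        rw [← hδkill]
        have hcast : ((m + 1 : ℕ) : ℂ) = ((m : ℂ) + 1) := by push_cast; ring
        rw [hcast] at hpres ⊢
        exact hpres
      obtain ⟨t', hw'⟩ := C.Hf_self_zero i₀ hHw
      have hfix : C.cox (v - t' • γ) = v - t' • γ := by
        rw [map_sub, map_smul, heγ, hev, hw']
        module
      obtain ⟨t'', ht''⟩ := C.fix_eq_delta i₀ hfix
      refine ⟨t', t'', ?_⟩
      have hv2 : v - t' • γ = t'' • C.δv := ht''
      rw [← hv2]
      module

/-- Proposition 4.3: `K (γ_c) β > 0` for `β` in the orbit of `T→` and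
`K (γ_c) β < 0` for `β` in the orbit of `T←`; in particular these orbits are
separated by the hyperplane `U c = {v : K (γ_c) v = 0}`. -/
theorem orbits_separated {n : ℕ} (C : AffineGCM n) (aff : Fin n)
    (haff : ((Subgroup.closure (C.s '' {j : Fin n | j ≠ aff}) : Subgroup (V n ≃ₗ[ℂ] V n)) : Set (V n ≃ₗ[ℂ] V n)).Finite)
    (γ : V n) (hγ : γ ∈ Vfin aff) (hγ1 : C.cox γ - γ = C.δv) :
    (∀ m : ℤ, ∀ x ∈ C.Tproj, ∃ r : ℝ, 0 < r ∧ C.K γ ((C.cox ^ m) x) = (r : ℂ)) ∧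
    (∀ m : ℤ, ∀ x ∈ C.Tinj, ∃ r : ℝ, r < 0 ∧ C.K γ ((C.cox ^ m) x) = (r : ℂ)) ∧
    (∀ v : V n, v ∈ eigSpan C.cox ↔ C.K γ v = 0) := by
  have hδeig : C.δv ∈ eigSpan C.cox := by
    apply Submodule.mem_iSup_of_mem (1 : ℂ)
    rw [Module.End.mem_eigenspace_iff, one_smul]
    exact C.cox_δ
  have heig_le : ∀ v ∈ eigSpan C.cox, C.K γ v = 0 := by
    intro v hv
    have hle : eigSpan C.cox ≤ LinearMap.ker (C.K γ) := by
      apply iSup_le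
      intro μ u hu
      rw [LinearMap.mem_ker]
      have hu' : C.cox u = μ • u := Module.End.mem_eigenspace_iff.mp hu
      rcases eq_or_ne μ 1 with rfl | hμ
      · rw [one_smul] at hu'
        obtain ⟨t, ht⟩ := C.fix_eq_delta aff hu'
        rw [ht, map_smul, K_δ_right, smul_zero]
      · have h1 : C.K γ (C.cox u) = C.K γ u := K_γ_cox C hγ1 u
        rw [hu', map_smul, smul_eq_mul] at h1
        have h2 : (μ - 1) * C.K γ u = 0 := by linear_combination h1
        rcases mul_eq_zero.mp h2 with h3 | h3
        · exact absurd (sub_eq_zero.mp h3) hμ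
        · exact h3
    exact LinearMap.mem_ker.mp (hle hv)
  have hdecomp : ∀ v : V n, ∃ (t : ℂ) (u : V n), u ∈ eigSpan C.cox ∧ v = t • γ + u := by
    intro v
    have htop : v ∈ ⨆ (μ : ℂ), Module.End.maxGenEigenspace (C.cox : Module.End ℂ (V n)) μ := by
      rw [Module.End.iSup_maxGenEigenspace_eq_top]
      trivial
    have hle : (⨆ (μ : ℂ), Module.End.maxGenEigenspace (C.cox : Module.End ℂ (V n)) μ)
        ≤ (Submodule.span ℂ {γ}) ⊔ eigSpan C.cox := by
      apply iSup_le
      intro μ x hx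
      obtain ⟨k, hk⟩ := (Module.End.mem_maxGenEigenspace _ _ _).mp hx
      rcases eq_or_ne μ 1 with rfl | hμ
      · obtain ⟨a, b, hab⟩ := C.genEig_one aff hγ1 k x hk
        rw [hab]
        apply Submodule.add_mem
        · exact Submodule.mem_sup_left
            (Submodule.smul_mem _ _ (Submodule.mem_span_singleton_self γ))
        · exact Submodule.mem_sup_right (Submodule.smul_mem _ _ hδeig)
      · have hx' := C.genEig_ne aff μ hμ k x hk
        refine Submodule.mem_sup_right ?_
        exact Submodule.mem_iSup_of_mem μ (Module.End.mem_eigenspace_iff.mpr hx')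
    obtain ⟨y, hy, u, hu, hyu⟩ := Submodule.mem_sup.mp (hle htop)
    obtain ⟨t, rfl⟩ := Submodule.mem_span_singleton.mp hy
    exact ⟨t, u, hu, hyu.symm⟩
  have hn : 0 < n := aff.pos
  have hKγγ : C.K γ γ ≠ 0 := by
    intro h0
    have hval := K_Tproj C hγ1 ⟨0, hn⟩
    have hsimp : ((List.ofFn C.s).take ((⟨0, hn⟩ : Fin n) : ℕ)).prod (α ⟨0, hn⟩)
        = α ⟨0, hn⟩ := rfl
    rw [hsimp] at hval
    obtain ⟨t, u, hu, hdec⟩ := hdecomp (α ⟨0, hn⟩)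
    have hz : C.K γ (α ⟨0, hn⟩) = 0 := by
      rw [hdec, map_add, map_smul, h0, heig_le u hu, smul_zero, add_zero]
    rw [hval] at hz
    rcases mul_eq_zero.mp hz with h | h
    · exact C.d_ne _ h
    · have : (C.dz ⟨0, hn⟩ : ℂ) ≠ 0 := by
        exact_mod_cast ne_of_gt (C.dz_pos ⟨0, hn⟩)
      exact this h
  refine ⟨?_, ?_, ?_⟩
  · rintro m x ⟨k, rfl⟩
    refine ⟨C.d k * (C.dz k : ℝ), ?_, ?_⟩
    · exact mul_pos (C.d_pos k) (by exact_mod_cast C.dz_pos k)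
    · rw [K_γ_zpow C hγ1, K_Tproj C hγ1 k]
      push_cast
      ring
  · rintro m x ⟨k, rfl⟩
    refine ⟨-(C.d k * (C.dz k : ℝ)), ?_, ?_⟩
    · have : 0 < C.d k * (C.dz k : ℝ) :=
        mul_pos (C.d_pos k) (by exact_mod_cast C.dz_pos k)
      linarith
    · rw [K_γ_zpow C hγ1, K_Tinj C hγ1 k]
      push_cast
      ring
  · intro v
    constructor
    · exact heig_le v
    · intro hv
      obtain ⟨t, u, hu, rfl⟩ := hdecomp v
      have ht0 : t = 0 := by
        rw [map_add, map_smul, heig_le u hu, add_zero, smul_eq_mul] at hv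
        rcases mul_eq_zero.mp hv with h | h
        · exact h
        · exact absurd h hKγγ
      rw [ht0, zero_smul, zero_add]
      exact hu


end AffineGCM
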